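/- Let p > 1, β ≠ 0, γ = β + p - 1 ≠ 0, d > 0, l ≥ 0, and define f(t) = (1/β)((t+d)^β - (l+d)^β) and F(t) = (p/γ)(t+d)^{γ/p} on the interval I, where I = [l, ∞) if β > 0 and I = [0, l] if β < 0. Then for all a, b ∈ I: |a-b|^{p-2}(a-b)(f(a) - f(b)) ≥ |F(a) - F(b)|^p. -/

import Mathlib

open MeasureTheory Set intervalIntegral

private lemma rpow_shift_integral {d r b a : ℝ} (hb : 0 ≤ b) (ha : 0 ≤ a) (hd : 0 < d)
    (hr : r ≠ -1) :
    ∫ t in b..a, (t + d) ^ r = ((a + d) ^ (r + 1) - (b + d) ^ (r + 1)) / (r + 1) := by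
  rw [intervalIntegral.integral_comp_add_right (fun s => s ^ r) d]
  refine integral_rpow (Or.inr ⟨hr, fun h => ?_⟩)
  rcases Set.mem_uIcc.mp h with h | h <;> linarith [h.1, h.2]

private lemma key_ineq (p β γ d b a : ℝ) (hp : 1 < p) (hβ : β ≠ 0) (hγdef : γ = β + p - 1)
    (hγ : γ ≠ 0) (hd : 0 < d) (hb0 : 0 ≤ b) (hab : b ≤ a) :
    |a - b| ^ (p - 2) * (a - b) * ((1 / β) * ((a + d) ^ β - (b + d) ^ β))
      ≥ |(p / γ) * (a + d) ^ (γ / p) - (p / γ) * (b + d) ^ (γ / p)| ^ p := by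
  have hp0 : (0:ℝ) < p := lt_trans one_pos hp
  rcases eq_or_lt_of_le hab with rfl | hlt
  · simp [Real.zero_rpow (ne_of_gt hp0)]
  set I := ∫ t in b..a, (t + d) ^ ((β - 1) / p) with hIdef
  set J := ∫ t in b..a, (t + d) ^ (β - 1) with hJdef
  have ha0 : 0 ≤ a := le_trans hb0 hab
  have habp : 0 < a - b := sub_pos.2 hlt
  have hβr : β - 1 ≠ -1 := fun h => hβ (by linarith)
  have hγp : γ / p ≠ 0 := div_ne_zero hγ (ne_of_gt hp0)
  have hJ : J = (1 / β) * ((a + d) ^ β - (b + d) ^ β) := by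
    rw [hJdef, rpow_shift_integral hb0 ha0 hd hβr]
    have h1 : β - 1 + 1 = β := by ring
    rw [h1]; ring
  have hexp : (β - 1) / p + 1 = γ / p := by field_simp [hγdef]; linarith
  have hβpr : (β - 1) / p ≠ -1 := by
    intro h; apply hγp; rw [← hexp, h]; ring
  have hI : I = (p / γ) * ((a + d) ^ (γ / p) - (b + d) ^ (γ / p)) := by
    rw [hIdef, rpow_shift_integral hb0 ha0 hd hβpr, hexp]
    rw [div_eq_mul_inv, inv_div]; ring
  have hpos : ∀ t ∈ Set.Ioc b a, (0:ℝ) < t + d := fun t ht => by linarith [ht.1]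
  have hInn : 0 ≤ I := intervalIntegral.integral_nonneg hab fun t ht =>
    Real.rpow_nonneg (by linarith [ht.1]) _
  have hJnn : 0 ≤ J := intervalIntegral.integral_nonneg hab fun t ht =>
    Real.rpow_nonneg (by linarith [ht.1]) _
  have hq := Real.HolderConjugate.conjExponent hp
  set q := Real.conjExponent p with hqdef
  set μ := volume.restrict (Set.Ioc b a) with hμ
  haveI : IsFiniteMeasure μ :=
    ⟨by rw [hμ, Measure.restrict_apply_univ, Real.volume_Ioc]; exact ENNReal.ofReal_lt_top⟩
  have hcont : ContinuousOn (fun t : ℝ => (t + d) ^ ((β - 1) / p)) (Set.Ioc b a) :=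
    ((continuous_id.add continuous_const).continuousOn).rpow_const fun t ht =>
      Or.inl (ne_of_gt (hpos t ht))
  have hmeas : AEStronglyMeasurable (fun t : ℝ => (t + d) ^ ((β - 1) / p)) μ :=
    hcont.aestronglyMeasurable measurableSet_Ioc
  set C := max ((b + d) ^ ((β - 1) / p)) ((a + d) ^ ((β - 1) / p)) with hC
  have hbound : ∀ t ∈ Set.Ioc b a, ‖(t + d) ^ ((β - 1) / p)‖ ≤ C := by
    intro t ht
    rw [Real.norm_of_nonneg (Real.rpow_nonneg (le_of_lt (hpos t ht)) _)]
    rcases le_or_gt 0 ((β - 1) / p) with hr | hr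
    · exact le_max_of_le_right
        (Real.rpow_le_rpow (le_of_lt (hpos t ht)) (by linarith [ht.2]) hr)
    · exact le_max_of_le_left
        (Real.rpow_le_rpow_of_nonpos (by linarith) (by linarith [ht.1]) (le_of_lt hr))
  have hmemf : MemLp (fun t : ℝ => (t + d) ^ ((β - 1) / p)) (ENNReal.ofReal p) μ :=
    (memLp_top_of_bound hmeas C
      ((ae_restrict_iff' measurableSet_Ioc).2 (ae_of_all _ hbound))).mono_exponent le_top
  have hmemg : MemLp (fun _ : ℝ => (1:ℝ)) (ENNReal.ofReal q) μ := memLp_const 1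
  have hfnn : 0 ≤ᵐ[μ] fun t : ℝ => (t + d) ^ ((β - 1) / p) :=
    (ae_restrict_iff' measurableSet_Ioc).2
      (ae_of_all _ fun t ht => Real.rpow_nonneg (le_of_lt (hpos t ht)) _)
  have holder := MeasureTheory.integral_mul_le_Lp_mul_Lq_of_nonneg hq hfnn
    (ae_of_all _ fun _ => zero_le_one) hmemf hmemg
  have e1 : (∫ t, (t + d) ^ ((β - 1) / p) * 1 ∂μ) = I := by
    simp only [mul_one]
    rw [hIdef, intervalIntegral.integral_of_le hab]
  have e2 : (∫ t, ((t + d) ^ ((β - 1) / p)) ^ p ∂μ) = J := by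
    rw [hJdef, intervalIntegral.integral_of_le hab]
    refine setIntegral_congr_fun measurableSet_Ioc fun t ht => ?_
    rw [← Real.rpow_mul (le_of_lt (hpos t ht)), div_mul_cancel₀ _ (ne_of_gt hp0)]
  have e3 : (∫ _ : ℝ, (1:ℝ) ^ q ∂μ) = a - b := by
    simp only [Real.one_rpow, hμ, MeasureTheory.setIntegral_const, smul_eq_mul, mul_one,
      Real.volume_Ioc]
    rw [Real.volume_real_Ioc_of_le hab]
  rw [e1, e2, e3] at holder
  have e4 : 1 / q * p = p - 1 := by
    rw [mul_comm, mul_one_div]; exact hq.div_conj_eq_sub_one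
  have hIp : I ^ p ≤ J * (a - b) ^ (p - 1) := by
    calc I ^ p ≤ (J ^ (1 / p) * (a - b) ^ (1 / q)) ^ p :=
          Real.rpow_le_rpow hInn holder (le_of_lt hp0)
      _ = J * (a - b) ^ (p - 1) := by
          rw [Real.mul_rpow (Real.rpow_nonneg hJnn _) (Real.rpow_nonneg (le_of_lt habp) _),
            ← Real.rpow_mul hJnn, ← Real.rpow_mul (le_of_lt habp),
            one_div_mul_cancel (ne_of_gt hp0), Real.rpow_one, e4]
  have eR : (p / γ) * (a + d) ^ (γ / p) - (p / γ) * (b + d) ^ (γ / p) = I := by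
    rw [hI]; ring
  have eL : (a - b) ^ (p - 2) * (a - b) = (a - b) ^ (p - 1) := by
    nth_rewrite 2 [← Real.rpow_one (a - b)]
    rw [← Real.rpow_add habp]; congr 1; ring
  rw [abs_of_pos habp, eR, abs_of_nonneg hInn, ← hJ, eL, mul_comm]
  exact hIp

theorem stmt_3 (p β γ d l a b : ℝ) (hp : 1 < p) (hβ : β ≠ 0) (hγdef : γ = β + p - 1)
    (hγ : γ ≠ 0) (hd : 0 < d) (hl : 0 ≤ l)
    (ha : if 0 < β then l ≤ a else 0 ≤ a ∧ a ≤ l)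
    (hb : if 0 < β then l ≤ b else 0 ≤ b ∧ b ≤ l) :
    |a - b| ^ (p - 2) * (a - b) *
        ((1 / β) * ((a + d) ^ β - (l + d) ^ β) - (1 / β) * ((b + d) ^ β - (l + d) ^ β))
      ≥ |(p / γ) * (a + d) ^ (γ / p) - (p / γ) * (b + d) ^ (γ / p)| ^ p := by
  have h0a : 0 ≤ a := by split_ifs at ha; exacts [le_trans hl ha, ha.1]
  have h0b : 0 ≤ b := by split_ifs at hb; exacts [le_trans hl hb, hb.1]
  rcases le_total b a with hab | hab
  · have h := key_ineq p β γ d b a hp hβ hγdef hγ hd h0b hab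
    set K := |a - b| ^ (p - 2) with hK
    have e : K * (a - b) *
        ((1 / β) * ((a + d) ^ β - (l + d) ^ β) - (1 / β) * ((b + d) ^ β - (l + d) ^ β))
        = K * (a - b) * ((1 / β) * ((a + d) ^ β - (b + d) ^ β)) := by ring
    rw [e]; exact h
  · have h := key_ineq p β γ d a b hp hβ hγdef hγ hd h0a hab
    rw [abs_sub_comm a b, abs_sub_comm ((p / γ) * (a + d) ^ (γ / p)) _]
    set K := |b - a| ^ (p - 2) with hK
    have e : K * (a - b) *
        ((1 / β) * ((a + d) ^ β - (l + d) ^ β) - (1 / β) * ((b + d) ^ β - (l + d) ^ β))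
        = K * (b - a) * ((1 / β) * ((b + d) ^ β - (a + d) ^ β)) := by ring
    rw [e]; exact h
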